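/- arXiv:2003.08969 — 3 statements merged into one kernel-verified Lean document; each statement's English description precedes it below -/
import Mathlib

section
/- For a C² function φ on ℝ^N with ∇φ(x) ≠ 0, the midpoint combination (1/2) max_{y ∈ B̄_ε(x)} φ(y) + (1/2) min_{y ∈ B̄_ε(x)} φ(y) - φ(x) equals (ε²/2) ⟨D²φ(x) w, w⟩ + o(ε²) as ε → 0, where w = ∇φ(x)/|∇φ(x)|. -/
open Asymptotics
open scoped RealInnerProductSpace
open scoped Topology

theorem taylor2 {E : Type*} [NormedAddCommGroup E] [InnerProductSpace ℝ E]
    (f : E → ℝ) (hf : ContDiff ℝ 2 f) (x : E) :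
    (fun z : E => f (x + z) - f x - fderiv ℝ f x z
      - (1/2) * fderiv ℝ (fderiv ℝ f) x z z) =o[𝓝 (0 : E)] fun z => ‖z‖ ^ 2 := by
  set F := fderiv ℝ f with hFdef
  have hdf : Differentiable ℝ f := hf.differentiable (by norm_num)
  have hF1 : ContDiff ℝ 1 F := hf.fderiv_right (by norm_num)
  have hFd : Differentiable ℝ F := hF1.differentiable (by norm_num)
  set B := fderiv ℝ F x with hBdef
  have hB : HasFDerivAt F B x := (hFd x).hasFDerivAt
  have Bsymm : ∀ u v : E, B u v = B v u :=
    second_derivative_symmetric (fun y => (hdf y).hasFDerivAt) hB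
  set g : E → ℝ := fun z => f (x + z) - F x z - (1/2) * B z z with hgdef
  have hg : ∀ z : E, HasFDerivAt g (F (x + z) - F x - B z) z := by
    intro z
    have h1 : HasFDerivAt (fun z : E => f (x + z)) (F (x + z)) z := by
      have := (hdf (x + z)).hasFDerivAt.comp z ((hasFDerivAt_id z).const_add x)
      exact this
    have h2 : HasFDerivAt (fun z : E => F x z) (F x) z := (F x).hasFDerivAt
    have hbil : IsBoundedBilinearMap ℝ fun p : E × E => B p.1 p.2 :=
      B.isBoundedBilinearMap
    have hdiag : HasFDerivAt (fun z : E => ((z, z) : E × E))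
        ((ContinuousLinearMap.id ℝ E).prod (ContinuousLinearMap.id ℝ E)) z :=
      (hasFDerivAt_id z).prodMk (hasFDerivAt_id z)
    have h3' : HasFDerivAt ((fun p : E × E => B p.1 p.2) ∘ fun z : E => ((z, z) : E × E))
        ((hbil.deriv (z, z)).comp
          ((ContinuousLinearMap.id ℝ E).prod (ContinuousLinearMap.id ℝ E))) z :=
      HasFDerivAt.comp (g := fun p : E × E => B p.1 p.2)
        (f := fun z : E => ((z, z) : E × E)) z (hbil.hasFDerivAt (z, z)) hdiag
    rw [Function.comp_def] at h3'
    have h3 : HasFDerivAt (fun z : E => (1/2 : ℝ) * B z z) (B z) z := by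
      have := h3'.const_mul (1/2 : ℝ)
      convert this using 1
      · rfl
      · rfl
      ext k
      simp [IsBoundedBilinearMap.deriv_apply, Bsymm k z]
      ring
    exact (h1.sub h2).sub h3
  have hd : (fun z : E => F (x + z) - F x - B z) =o[𝓝 (0 : E)] fun z => ‖z‖ := by
    have h0 : (fun y => F y - F x - B (y - x)) =o[𝓝 x] fun y => y - x :=
      hasFDerivAt_iff_isLittleO.mp hB
    have ht : Filter.Tendsto (fun z : E => x + z) (𝓝 0) (𝓝 x) := by
      simpa using (Filter.tendsto_id (α := E) (x := 𝓝 (0:E))).const_add x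
    have h1 := h0.comp_tendsto ht
    simp only [Function.comp_def, add_sub_cancel_left] at h1
    exact h1.norm_right
  have key : (fun z : E => g z - g 0) =o[𝓝 (0 : E)] fun z => ‖z‖ ^ 2 := by
    rw [isLittleO_iff]
    intro c hc
    rw [isLittleO_iff] at hd
    obtain ⟨δ, hδ, hball⟩ := Metric.eventually_nhds_iff.mp (hd hc)
    refine Metric.eventually_nhds_iff.mpr ⟨δ, hδ, fun z hz => ?_⟩
    have hzn : ‖z‖ < δ := by rw [dist_zero_right] at hz; exact hz
    have hconv : Convex ℝ (Metric.closedBall (0 : E) ‖z‖) := convex_closedBall _ _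
    have hder : ∀ y ∈ Metric.closedBall (0 : E) ‖z‖,
        HasFDerivWithinAt g (F (x + y) - F x - B y) (Metric.closedBall (0 : E) ‖z‖) y :=
      fun y _ => (hg y).hasFDerivWithinAt
    have hbound : ∀ y ∈ Metric.closedBall (0 : E) ‖z‖,
        ‖F (x + y) - F x - B y‖ ≤ c * ‖z‖ := by
      intro y hy
      have hyz : ‖y‖ ≤ ‖z‖ := by simpa using hy
      have hyd : dist y 0 < δ := by rw [dist_zero_right]; exact lt_of_le_of_lt hyz hzn
      have h2 := hball hyd
      rw [norm_norm] at h2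
      exact h2.trans (by nlinarith [norm_nonneg z])
    have h0mem : (0 : E) ∈ Metric.closedBall (0 : E) ‖z‖ :=
      Metric.mem_closedBall_self (norm_nonneg z)
    have hzmem : z ∈ Metric.closedBall (0 : E) ‖z‖ := by
      simp [Metric.mem_closedBall]
    have hmv := hconv.norm_image_sub_le_of_norm_hasFDerivWithin_le (x := (0:E)) (y := z)
      hder hbound h0mem hzmem
    calc ‖g z - g 0‖ ≤ c * ‖z‖ * ‖z - 0‖ := hmv
      _ = c * ‖z‖ ^ 2 := by rw [sub_zero]; ring
      _ ≤ c * ‖‖z‖ ^ 2‖ := by simp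
  have heq : (fun z : E => f (x + z) - f x - F x z - (1/2) * B z z) = fun z => g z - g 0 := by
    funext z
    simp [hgdef]
    ring
  rw [heq]
  exact key

set_option maxHeartbeats 4000000 in
theorem sup_exp (N : ℕ) (ψ : EuclideanSpace ℝ (Fin N) → ℝ) (hψ : ContDiff ℝ 2 ψ)
    (x : EuclideanSpace ℝ (Fin N)) (hg : gradient ψ x ≠ 0) :
    (fun ε : ℝ => sSup (ψ '' Metric.closedBall x ε) - ψ x - ε * ‖gradient ψ x‖
      - ε ^ 2 / 2 * fderiv ℝ (fderiv ℝ ψ) x (‖gradient ψ x‖⁻¹ • gradient ψ x)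
          (‖gradient ψ x‖⁻¹ • gradient ψ x)) =o[𝓝[>] (0:ℝ)] fun ε => ε ^ 2 := by
  set g := gradient ψ x with hgdef
  set G := ‖g‖ with hGdef
  have hG : 0 < G := norm_pos_iff.mpr hg
  set w : EuclideanSpace ℝ (Fin N) := G⁻¹ • g with hwdef
  have hw : ‖w‖ = 1 := by
    rw [hwdef, norm_smul, norm_inv, norm_norm, ← hGdef, inv_mul_cancel₀ hG.ne']
  set B := fderiv ℝ (fderiv ℝ ψ) x with hBdef
  set C := ‖B‖ with hCdef
  have hC : 0 ≤ C := by rw [hCdef]; exact norm_nonneg B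
  have hFg : ∀ v, fderiv ℝ ψ x v = ⟪g, v⟫ := by
    intro v
    rw [hgdef, gradient, ← InnerProductSpace.toDual_apply_apply,
      LinearIsometryEquiv.apply_symm_apply]
  have hT := taylor2 ψ hψ x
  rw [isLittleO_iff]
  intro c hc
  set η := c / 2 with hηdef
  have hη : 0 < η := by positivity
  obtain ⟨δ₁, hδ₁, hR⟩ := Metric.eventually_nhds_iff.mp (isLittleO_iff.mp hT hη)
  have hR' : ∀ z : EuclideanSpace ℝ (Fin N), dist z 0 < δ₁ →
      |ψ (x + z) - ψ x - ⟪g, z⟫ - 1/2 * B z z| ≤ η * ‖z‖ ^ 2 := by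
    intro z hz
    have h1 := hR hz
    rw [hFg, show fderiv ℝ (fderiv ℝ ψ) x = B from rfl] at h1
    rw [Real.norm_eq_abs, Real.norm_eq_abs,
      abs_of_nonneg (pow_nonneg (norm_nonneg z) 2)] at h1
    exact h1
  clear hR hT
  set δ₂ := η * G / (C ^ 2 + 1) with hδ₂def
  have hδ₂ : 0 < δ₂ := by positivity
  clear_value g G w B C η δ₂
  filter_upwards [Ioo_mem_nhdsGT_of_mem
    (Set.mem_Ico.mpr ⟨le_rfl, lt_min hδ₁ hδ₂⟩)] with ε hε
  obtain ⟨hε1, hε2⟩ := hε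
  have hεδ₁ : ε < δ₁ := lt_of_lt_of_le hε2 (min_le_left _ _)
  have hεδ₂ : ε < δ₂ := lt_of_lt_of_le hε2 (min_le_right _ _)
  have hεC : ε * (C ^ 2 + 1) ≤ η * G := by
    rw [hδ₂def, lt_div_iff₀ (by positivity)] at hεδ₂
    linarith
  -- Taylor remainder bound
  have hRb : ∀ z : EuclideanSpace ℝ (Fin N), ‖z‖ ≤ ε →
      |ψ (x + z) - ψ x - ⟪g, z⟫ - 1/2 * B z z| ≤ η * ε ^ 2 := by
    intro z hz
    have hd : dist z 0 < δ₁ := by rw [dist_zero_right]; exact lt_of_le_of_lt hz hεδ₁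
    have h1 := hR' z hd
    have h2 : ‖z‖ ^ 2 ≤ ε ^ 2 := by nlinarith [norm_nonneg z]
    nlinarith [norm_nonneg z]
  have hEq : B (ε • w) (ε • w) = ε ^ 2 * B w w := by
    simp [map_smul, smul_eq_mul]
    ring
  have hKne : (ψ '' Metric.closedBall x ε).Nonempty :=
    ⟨ψ x, ⟨x, Metric.mem_closedBall_self hε1.le, rfl⟩⟩
  have hKbdd : BddAbove (ψ '' Metric.closedBall x ε) :=
    ((isCompact_closedBall x ε).image hψ.continuous).bddAbove
  -- upper bound
  have hub : ∀ y ∈ Metric.closedBall x ε,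
      ψ y ≤ ψ x + ε * G + ε ^ 2 / 2 * B w w + 2 * η * ε ^ 2 := by
    intro y hy
    set z := y - x with hzdef
    have hzε : ‖z‖ ≤ ε := by
      rw [hzdef, ← dist_eq_norm]; exact Metric.mem_closedBall.mp hy
    have hyx : y = x + z := by rw [hzdef]; abel
    clear_value z
    set d := ε * G - ⟪g, z⟫ with hddef
    have hd0 : 0 ≤ d := by
      have := real_inner_le_norm g z
      have h2 : ‖g‖ * ‖z‖ ≤ G * ε := by rw [← hGdef]; nlinarith
      rw [hddef]; nlinarith
    clear_value d
    set r := ‖z - ε • w‖ with hrdef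
    have hr0 : 0 ≤ r := norm_nonneg _
    clear_value r
    have hr2 : G * r ^ 2 ≤ 2 * ε * d := by
      have hexp : r ^ 2 = ‖z‖ ^ 2 - 2 * (ε * (G⁻¹ * ⟪g, z⟫)) + ε ^ 2 := by
        rw [hrdef, @norm_sub_sq_real, real_inner_smul_right, hwdef,
          real_inner_smul_right, real_inner_comm, norm_smul]
        rw [← hwdef, hw, Real.norm_eq_abs, abs_of_pos hε1]
        ring
      have hGinv : G * (G⁻¹ * ⟪g, z⟫) = ⟪g, z⟫ := by field_simp
      have hz2 : ‖z‖ ^ 2 ≤ ε ^ 2 := by nlinarith [norm_nonneg z]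
      nlinarith [mul_le_mul_of_nonneg_left hz2 hG.le]
    -- |B z z - ε² B w w| ≤ 2 C ε r
    have hsplit : B z z - B (ε • w) (ε • w) = B z (z - ε • w) + B (z - ε • w) (ε • w) := by
      rw [map_sub, map_sub, ContinuousLinearMap.sub_apply]
      ring
    have hb1 : |B z (z - ε • w)| ≤ C * ε * r := by
      have h0 := B.le_opNorm₂ z (z - ε • w)
      rw [Real.norm_eq_abs, ← hCdef, ← hrdef] at h0
      nlinarith [mul_nonneg (mul_nonneg hC hr0) (sub_nonneg.mpr hzε)]
    have hb2 : |B (z - ε • w) (ε • w)| ≤ C * ε * r := by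
      have h1 := B.le_opNorm₂ (z - ε • w) (ε • w)
      have h2 : ‖ε • w‖ = ε := by rw [norm_smul, hw, Real.norm_eq_abs, abs_of_pos hε1]; ring
      rw [Real.norm_eq_abs, ← hCdef, ← hrdef, h2] at h1
      nlinarith [mul_nonneg (mul_nonneg hC hε1.le) hr0]
    have hQ : 1/2 * B z z - ε ^ 2 / 2 * B w w ≤ C * ε * r := by
      have := hsplit
      have habs : B z z - B (ε • w) (ε • w) ≤ 2 * (C * ε * r) := by
        rw [hsplit]
        have := abs_le.mp hb1
        have := abs_le.mp hb2
        linarith [(abs_le.mp hb1).2, (abs_le.mp hb2).2]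
      rw [hEq] at habs
      linarith
    -- AM-GM step
    have key : C * ε * r ≤ d / 2 + C ^ 2 * ε ^ 3 / G := by
      have key' : C * ε * r * G ≤ (d / 2 + C ^ 2 * ε ^ 3 / G) * G := by
        have hexp : (d / 2 + C ^ 2 * ε ^ 3 / G) * G = d * G / 2 + C ^ 2 * ε ^ 3 := by
          field_simp
        rw [hexp]
        nlinarith [sq_nonneg (2 * C * ε ^ 2 - G * r), mul_le_mul_of_nonneg_left hr2 hε1.le,
          mul_pos hε1 hG]
      exact le_of_mul_le_mul_right key' hG
    have he4 : C ^ 2 * ε ^ 3 / G ≤ η * ε ^ 2 := by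
      rw [div_le_iff₀ hG]
      nlinarith [sq_nonneg ε, mul_le_mul_of_nonneg_left hεC (sq_nonneg ε)]
    have hRz := (abs_le.mp (hRb z hzε)).2
    rw [← hyx] at hRz
    linarith
  have hS_le : sSup (ψ '' Metric.closedBall x ε)
      ≤ ψ x + ε * G + ε ^ 2 / 2 * B w w + 2 * η * ε ^ 2 := by
    apply csSup_le hKne
    rintro _ ⟨y, hy, rfl⟩
    exact hub y hy
  have hS_ge : ψ x + ε * G + ε ^ 2 / 2 * B w w - η * ε ^ 2
      ≤ sSup (ψ '' Metric.closedBall x ε) := by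
    have hmem : x + ε • w ∈ Metric.closedBall x ε := by
      rw [Metric.mem_closedBall, dist_eq_norm]
      have : ‖x + ε • w - x‖ = ‖ε • w‖ := by congr 1; abel
      rw [this, norm_smul, hw, Real.norm_eq_abs, abs_of_pos hε1]; simp
    have hle : ψ (x + ε • w) ≤ sSup (ψ '' Metric.closedBall x ε) :=
      le_csSup hKbdd ⟨x + ε • w, hmem, rfl⟩
    have hinner : ⟪g, ε • w⟫ = ε * G := by
      rw [real_inner_smul_right, hwdef, real_inner_smul_right,
        real_inner_self_eq_norm_sq, ← hGdef]
      field_simp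
    have hεw : ‖ε • w‖ ≤ ε := by
      rw [norm_smul, hw, Real.norm_eq_abs, abs_of_pos hε1]; simp
    have hRz := (abs_le.mp (hRb (ε • w) hεw)).1
    rw [hinner, hEq] at hRz
    linarith
  rw [hηdef] at hS_le hS_ge
  rw [Real.norm_eq_abs, Real.norm_eq_abs, abs_le]
  have : |ε ^ 2| = ε ^ 2 := abs_of_pos (by positivity)
  rw [this]
  constructor <;> [linarith; linarith]

/-- For a `C²` function `φ` with `∇φ(x) ≠ 0`,
`½ max_{B̄_ε(x)} φ + ½ min_{B̄_ε(x)} φ - φ(x) = (ε²/2)⟨D²φ(x) w, w⟩ + o(ε²)` as `ε → 0⁺`,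
where `w = ∇φ(x)/|∇φ(x)|`. -/
theorem statement5 (N : ℕ) (φ : EuclideanSpace ℝ (Fin N) → ℝ) (hφ : ContDiff ℝ 2 φ)
    (x : EuclideanSpace ℝ (Fin N)) (hg : gradient φ x ≠ 0) :
    (fun ε : ℝ =>
        (1 / 2) * sSup (φ '' Metric.closedBall x ε) +
            (1 / 2) * sInf (φ '' Metric.closedBall x ε) - φ x -
          ε ^ 2 / 2 *
            iteratedFDeriv ℝ 2 φ x
              ![‖gradient φ x‖⁻¹ • gradient φ x, ‖gradient φ x‖⁻¹ • gradient φ x])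
      =o[𝓝[>] (0 : ℝ)] fun ε => ε ^ 2 := by
  have h1 := sup_exp N φ hφ x hg
  have hgradneg : gradient (fun y => -φ y) x = -gradient φ x := by
    rw [gradient, gradient, fderiv_fun_neg, map_neg]
  have hsnd : fderiv ℝ (fderiv ℝ (fun y => -φ y)) x = -(fderiv ℝ (fderiv ℝ φ) x) := by
    have h : (fderiv ℝ fun y => -φ y) = fun y => -(fderiv ℝ φ y) := funext fun y => fderiv_neg
    rw [h, fderiv_fun_neg]
  have h2 := sup_exp N (fun y => -φ y) hφ.neg x
    (by rw [hgradneg]; exact neg_ne_zero.mpr hg)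
  rw [hgradneg, hsnd] at h2
  have himg : ∀ ε : ℝ, (fun y => -φ y) '' Metric.closedBall x ε
      = -(φ '' Metric.closedBall x ε) := by
    intro ε
    rw [show (fun y => -φ y) = (Neg.neg ∘ φ) from rfl, Set.image_comp, Set.image_neg_eq_neg]
  have h2' : (fun ε : ℝ => -sInf (φ '' Metric.closedBall x ε) + φ x - ε * ‖gradient φ x‖
      + ε ^ 2 / 2 * fderiv ℝ (fderiv ℝ φ) x (‖gradient φ x‖⁻¹ • gradient φ x)
          (‖gradient φ x‖⁻¹ • gradient φ x)) =o[𝓝[>] (0:ℝ)] fun ε => ε ^ 2 := by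
    refine h2.congr_left fun ε => ?_
    rw [himg, Real.sInf_def, neg_neg]
    simp only [norm_neg, smul_neg, map_neg, ContinuousLinearMap.neg_apply, neg_neg]
    ring
  have h3 := (h1.sub h2').const_mul_left (1/2 : ℝ)
  refine h3.congr_left fun ε => ?_
  rw [iteratedFDeriv_two_apply]
  simp only [Matrix.cons_val_zero, Matrix.cons_val_one, Matrix.head_cons]
  ring
end

section
/- Consider the one-dimensional process arising from the 'pull towards 0' strategy in the Tug-of-War game: with probability 1/2, |x_{k+1}| ≤ |x_k| + ε, and with probability 1/2, |x_{k+1}| = |x_k| + ε³/2^k − ε. Then the sequence N_k = |x_k| + ε³/2^k is a supermartingale: E[N_{k+1} | N_k] ≤ N_k. -/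
open MeasureTheory

/-- In the Tug-of-War game where one player pulls towards the origin, so that with
probability `1/2` one has `|x_{k+1}| ≤ |x_k| + ε` and with probability `1/2`
`|x_{k+1}| = |x_k| + ε³/2^k − ε` (expressed via the conditional expectation bound below),
the sequence `N_k = |x_k| + ε³/2^k` is a supermartingale. -/
theorem statement11 {Ω : Type*} [m : MeasurableSpace Ω] (μ : Measure Ω)
    [IsProbabilityMeasure μ] (ℱ : Filtration ℕ m) (N : ℕ)
    (x : ℕ → Ω → EuclideanSpace ℝ (Fin N)) (ε : ℝ) (hε : ε ∈ Set.Ioo (0 : ℝ) 1)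
    (hadapt : Adapted ℱ fun k ω => ‖x k ω‖ + ε ^ 3 / 2 ^ k)
    (hint : ∀ k, Integrable (fun ω => ‖x k ω‖) μ)
    (hcond : ∀ k, (μ[(fun ω => ‖x (k + 1) ω‖) | ℱ k]) ≤ᵐ[μ]
      fun ω => (1 / 2) * (‖x k ω‖ + ε) + (1 / 2) * (‖x k ω‖ + ε ^ 3 / 2 ^ k - ε)) :
    Supermartingale (fun k ω => ‖x k ω‖ + ε ^ 3 / 2 ^ k) ℱ μ := by
  refine ⟨hadapt.stronglyAdapted, fun i j hij => ?_, fun k => (hint k).add (integrable_const _)⟩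
  -- reduce to one step
  induction j, hij using Nat.le_induction with
  | base =>
    rw [condExp_of_stronglyMeasurable (ℱ.le i) (hadapt i).stronglyMeasurable ((hint i).add (integrable_const _))]
  | succ j hij ih =>
    have step : (μ[(fun ω => ‖x (j+1) ω‖ + ε ^ 3 / 2 ^ (j+1)) | ℱ j]) ≤ᵐ[μ]
        fun ω => ‖x j ω‖ + ε ^ 3 / 2 ^ j := by
      have h1 : (μ[(fun ω => ‖x (j+1) ω‖ + ε ^ 3 / 2 ^ (j+1)) | ℱ j]) =ᵐ[μ]
          fun ω => (μ[(fun ω => ‖x (j+1) ω‖) | ℱ j]) ω + ε ^ 3 / 2 ^ (j+1) := by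
        have h := condExp_add (μ := μ) (m := ℱ j) (hint (j+1))
          (integrable_const (ε ^ 3 / 2 ^ (j+1)))
        simp only [condExp_const (ℱ.le j)] at h
        exact h
      refine h1.trans_le ?_
      filter_upwards [hcond j] with ω hω
      have : (1 / 2 : ℝ) * (‖x j ω‖ + ε) + (1 / 2) * (‖x j ω‖ + ε ^ 3 / 2 ^ j - ε)
          + ε ^ 3 / 2 ^ (j+1) = ‖x j ω‖ + ε ^ 3 / 2 ^ j := by ring
      linarith [hω]
    have h2 : (μ[(fun ω => ‖x (j+1) ω‖ + ε ^ 3 / 2 ^ (j+1)) | ℱ i]) ≤ᵐ[μ]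
        μ[(fun ω => ‖x j ω‖ + ε ^ 3 / 2 ^ j) | ℱ i] := by
      calc (μ[(fun ω => ‖x (j+1) ω‖ + ε ^ 3 / 2 ^ (j+1)) | ℱ i])
          =ᵐ[μ] μ[μ[(fun ω => ‖x (j+1) ω‖ + ε ^ 3 / 2 ^ (j+1)) | ℱ j] | ℱ i] :=
            (condExp_condExp_of_le (ℱ.mono hij) (ℱ.le j)).symm
        _ ≤ᵐ[μ] μ[(fun ω => ‖x j ω‖ + ε ^ 3 / 2 ^ j) | ℱ i] :=
            condExp_mono (integrable_condExp) ((hint j).add (integrable_const _)) step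
    refine h2.trans ih
end

section
/- In the setting of the pull-towards-0 strategy, the conditional second-moment estimate E[(N_{k+1} − N_k)² | N_k] ≥ ε²/3 holds for all ε small enough, where N_k = |x_k| + ε³/2^k. -/
open MeasureTheory

/-- Conditional second-moment estimate for the pull-towards-0 strategy: if on an event `A`
of conditional probability `1/2` given `ℱ k` one has `N_{k+1} − N_k = −ε + ε³/2^{k+1}`, then
for all `ε` small enough, `E[(N_{k+1} − N_k)² | ℱ k] ≥ ε²/3`. -/
theorem statement12 : ∃ ε₀ > (0 : ℝ),
    ∀ (Ω : Type) (m : MeasurableSpace Ω) (μ : Measure Ω), IsProbabilityMeasure μ →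
    ∀ (ℱ : Filtration ℕ m) (ε : ℝ), 0 < ε → ε < ε₀ →
    ∀ (Nseq : ℕ → Ω → ℝ) (k : ℕ) (A : Set Ω), MeasurableSet A →
    Integrable (fun ω => (Nseq (k + 1) ω - Nseq k ω) ^ 2) μ →
    (μ[A.indicator (fun _ => (1 : ℝ)) | ℱ k] =ᵐ[μ] fun _ => 1 / 2) →
    (∀ ω ∈ A, Nseq (k + 1) ω - Nseq k ω = -ε + ε ^ 3 / 2 ^ (k + 1)) →
    (fun _ => ε ^ 2 / 3) ≤ᵐ[μ] μ[(fun ω => (Nseq (k + 1) ω - Nseq k ω) ^ 2) | ℱ k] := by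
  refine ⟨1/2, by norm_num, ?_⟩
  intro Ω m μ hμ ℱ ε hε hε' Nseq k A hA hInt hcond hval
  set c : ℝ := (-ε + ε ^ 3 / 2 ^ (k + 1)) ^ 2 with hc
  have hδ0 : 0 ≤ ε ^ 3 / 2 ^ (k + 1) := by positivity
  have hδ : ε ^ 3 / 2 ^ (k + 1) ≤ ε ^ 3 / 2 := by
    apply div_le_div_of_nonneg_left (by positivity) (by norm_num)
    calc (2:ℝ) = 2 ^ 1 := by norm_num
      _ ≤ 2 ^ (k + 1) := by
          exact pow_le_pow_right₀ (by norm_num) (Nat.le_add_left 1 k)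
  have hc23 : ε ^ 2 * (2/3) ≤ c := by
    have h1 : ε < 1/2 := hε'
    nlinarith [sq_nonneg (ε ^ 3 / 2 ^ (k + 1)), sq_nonneg ε, mul_pos hε hε]
  -- pointwise bound
  have hpt : A.indicator (fun _ => c) ≤ fun ω => (Nseq (k + 1) ω - Nseq k ω) ^ 2 := by
    intro ω
    by_cases hω : ω ∈ A
    · simp only [Set.indicator_of_mem hω]
      rw [hval ω hω]
    · simp only [Set.indicator_of_notMem hω]
      positivity
  have hIntInd : Integrable (A.indicator (fun _ => c)) μ :=
    (integrable_const c).indicator hA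
  have hmono := condExp_mono (m := ℱ k) (μ := μ) hIntInd hInt
    (Filter.Eventually.of_forall hpt)
  -- compute condexp of indicator
  have heq : A.indicator (fun _ => c) = c • A.indicator (fun _ => (1:ℝ)) := by
    funext ω
    by_cases h : ω ∈ A <;> simp [h]
  have hsmul : μ[A.indicator (fun _ => c)|ℱ k] =ᵐ[μ] c • μ[A.indicator (fun _ => (1:ℝ))|ℱ k] := by
    rw [heq]; exact condExp_smul c (A.indicator (fun _ => (1:ℝ))) (ℱ k)
  have hhalf : μ[A.indicator (fun _ => c)|ℱ k] =ᵐ[μ] fun _ => c / 2 := by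
    filter_upwards [hsmul, hcond] with ω h1 h2
    rw [h1, Pi.smul_apply, h2, smul_eq_mul]
    ring
  filter_upwards [hmono, hhalf] with ω h1 h2
  have : ε ^ 2 / 3 ≤ c / 2 := by linarith
  calc ε ^ 2 / 3 ≤ c / 2 := this
    _ = (μ[A.indicator (fun _ => c)|ℱ k]) ω := h2.symm
    _ ≤ _ := h1
end
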